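/- arXiv:2603.24193 — 2 statements merged into one kernel-verified Lean document; each statement's English description precedes it below -/
import Mathlib

section
/- Let (X, d, μ) be a measure space, let T ⊂ X be measurable with μ(T) < ∞, let p ∈ [1,2), let c₁, c₂, D > 0, and let f : X → [0,∞] be measurable. Suppose there is a point q ∈ X such that for all b ∈ T: if d(b,q) ≤ D then f(b) ≤ c₁/d(b,q), and if d(b,q) > D then f(b) ≤ c₁/D. Suppose moreover μ(B(q,r)) ≤ c₂ r² for all 0 < r ≤ D. Then ∫_T f^p dμ ≤ p c₁^p c₂ D^{2-p}/(2-p) + 2 c₁^p μ(T)/D^p. -/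
open MeasureTheory Metric ENNReal

theorem stmt0 {X : Type*} [MetricSpace X] [MeasurableSpace X]
    (μ : Measure X) (T : Set X) (hT : MeasurableSet T) (hTfin : μ T < ⊤)
    (p : ℝ) (hp : p ∈ Set.Ico (1:ℝ) 2)
    (c₁ c₂ D : ℝ) (hc₁ : 0 < c₁) (hc₂ : 0 < c₂) (hD : 0 < D)
    (f : X → ℝ≥0∞) (hf : Measurable f) (q : X)
    (hnear : ∀ b ∈ T, dist b q ≤ D → f b ≤ ENNReal.ofReal (c₁ / dist b q))
    (hfar : ∀ b ∈ T, D < dist b q → f b ≤ ENNReal.ofReal (c₁ / D))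
    (hball : ∀ r : ℝ, 0 < r → r ≤ D → μ (closedBall q r) ≤ ENNReal.ofReal (c₂ * r ^ 2)) :
    ∫⁻ b in T, f b ^ p ∂μ ≤
      ENNReal.ofReal (p * c₁ ^ p * c₂ * D ^ (2 - p) / (2 - p)) +
        ENNReal.ofReal (2 * c₁ ^ p / D ^ p) * μ T := by
  obtain ⟨hp1, hp2⟩ := hp
  have hppos : (0:ℝ) < p := by linarith
  set a : ℝ := c₁ / D with ha_def
  have ha : 0 < a := div_pos hc₁ hD
  -- the dominating real function
  set g : X → ℝ := fun b => c₁ / min (dist b q) D with hg_def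
  have hg_nn : ∀ b, 0 ≤ g b := fun b =>
    div_nonneg hc₁.le (le_min dist_nonneg hD.le)
  -- pointwise bound on T for f
  have hfg : ∀ b ∈ T, f b ≤ ENNReal.ofReal (g b) := by
    intro b hb
    rcases le_or_gt (dist b q) D with h | h
    · have hm : min (dist b q) D = dist b q := min_eq_left h
      rw [hg_def]; simp only [hm]
      exact hnear b hb h
    · have hm : min (dist b q) D = D := min_eq_right h.le
      rw [hg_def]; simp only [hm]
      exact hfar b hb h
  -- the real-valued version of f
  set h : X → ℝ := fun b => (f b).toReal with hh_def
  have hh_nn : ∀ b, 0 ≤ h b := fun b => ENNReal.toReal_nonneg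
  have hh_mble : Measurable h := hf.ennreal_toReal
  have hfh : ∀ b ∈ T, f b = ENNReal.ofReal (h b) := by
    intro b hb
    have hne : f b ≠ ⊤ := ((hfg b hb).trans_lt ENNReal.ofReal_lt_top).ne
    rw [hh_def]
    exact (ENNReal.ofReal_toReal hne).symm
  have hhg : ∀ b ∈ T, h b ≤ g b := by
    intro b hb
    have hne : f b ≠ ⊤ := ((hfg b hb).trans_lt ENNReal.ofReal_lt_top).ne
    rw [hh_def]
    exact ENNReal.toReal_le_of_le_ofReal (hg_nn b) (hfg b hb)
  set ν : Measure X := μ.restrict T with hν_def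
  have step1 : ∫⁻ b in T, f b ^ p ∂μ = ∫⁻ b, ENNReal.ofReal (h b ^ p) ∂ν := by
    refine setLIntegral_congr_fun hT (fun b hb => ?_)
    rw [hfh b hb, ENNReal.ofReal_rpow_of_nonneg (hh_nn b) hppos.le]
  -- layer cake
  have layer := MeasureTheory.lintegral_rpow_eq_lintegral_meas_lt_mul ν
    (Filter.Eventually.of_forall hh_nn) hh_mble.aemeasurable hppos
  rw [layer] at step1
  -- superlevel sets bound
  have hνle : ∀ t : ℝ, ν {x | t < h x} ≤ μ ({x | t < g x} ∩ T) := by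
    intro t
    rw [hν_def, Measure.restrict_apply' hT]
    exact μ.mono fun x hx => ⟨hx.1.trans_le (hhg x hx.2), hx.2⟩
  -- split the t-integral
  have hsum : ∫⁻ t in Set.Ioi (0:ℝ), ν {x | t < h x} * ENNReal.ofReal (t ^ (p - 1)) =
      (∫⁻ t in Set.Ioc 0 a, ν {x | t < h x} * ENNReal.ofReal (t ^ (p - 1))) +
      ∫⁻ t in Set.Ioi a, ν {x | t < h x} * ENNReal.ofReal (t ^ (p - 1)) := by
    rw [← lintegral_union measurableSet_Ioi (Set.Ioc_disjoint_Ioi le_rfl),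
      Set.Ioc_union_Ioi_eq_Ioi ha.le]
  have hrpow_mble : Measurable fun t : ℝ => ENNReal.ofReal (t ^ (p - 1)) := by
    fun_prop
  -- bound on the small-t piece
  have hIoc : ∫⁻ t in Set.Ioc 0 a, ν {x | t < h x} * ENNReal.ofReal (t ^ (p - 1)) ≤
      μ T * ENNReal.ofReal (a ^ p / p) := by
    have h1 : ∫⁻ t in Set.Ioc 0 a, ν {x | t < h x} * ENNReal.ofReal (t ^ (p - 1)) ≤
        ∫⁻ t in Set.Ioc 0 a, μ T * ENNReal.ofReal (t ^ (p - 1)) := by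
      refine setLIntegral_mono (measurable_const.mul hrpow_mble) fun t _ => ?_
      refine mul_le_mul_left ?_ _
      calc ν {x | t < h x} ≤ ν Set.univ := ν.mono (Set.subset_univ _)
        _ = μ T := by rw [hν_def, Measure.restrict_apply_univ]
    have h2 : ∫⁻ t in Set.Ioc 0 a, ENNReal.ofReal (t ^ (p - 1)) =
        ENNReal.ofReal (a ^ p / p) := by
      rw [← ofReal_integral_eq_lintegral_ofReal]
      · congr 1
        rw [← intervalIntegral.integral_of_le ha.le,
          integral_rpow (Or.inl (by linarith : (-1:ℝ) < p - 1))]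
        rw [Real.zero_rpow (by linarith : p - 1 + 1 ≠ 0)]
        ring_nf
      · exact (intervalIntegrable_iff_integrableOn_Ioc_of_le ha.le).mp
          (intervalIntegral.intervalIntegrable_rpow' (by linarith))
      · filter_upwards [self_mem_ae_restrict
          (measurableSet_Ioc : MeasurableSet (Set.Ioc (0:ℝ) a))] with t ht
        exact Real.rpow_nonneg ht.1.le _
    calc _ ≤ ∫⁻ t in Set.Ioc 0 a, μ T * ENNReal.ofReal (t ^ (p - 1)) := h1
      _ = μ T * ∫⁻ t in Set.Ioc 0 a, ENNReal.ofReal (t ^ (p - 1)) :=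
          lintegral_const_mul _ hrpow_mble
      _ = μ T * ENNReal.ofReal (a ^ p / p) := by rw [h2]
  -- bound on the large-t piece
  have hIoi : ∫⁻ t in Set.Ioi a, ν {x | t < h x} * ENNReal.ofReal (t ^ (p - 1)) ≤
      ENNReal.ofReal (c₂ * c₁ ^ 2 * (a ^ (p - 2) / (2 - p))) := by
    have key : ∀ t ∈ Set.Ioi a, ν {x | t < h x} * ENNReal.ofReal (t ^ (p - 1)) ≤
        ENNReal.ofReal (c₂ * c₁ ^ 2 * t ^ (p - 3)) := by
      intro t ht
      have hta : a < t := ht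
      have htpos : 0 < t := ha.trans hta
      have hct : 0 < c₁ / t := div_pos hc₁ htpos
      have hctD : c₁ / t < D := by
        rw [div_lt_iff₀ htpos]
        rw [ha_def, div_lt_iff₀ hD] at hta
        linarith [hta]
      have hsub2 : {x | t < g x} ⊆ closedBall q (c₁ / t) := by
        intro x hx
        simp only [Set.mem_setOf_eq, hg_def] at hx
        have hmpos : 0 < min (dist x q) D := by
          by_contra hcon
          push_neg at hcon
          have : min (dist x q) D = 0 :=
            le_antisymm hcon (le_min dist_nonneg hD.le)
          rw [this, _root_.div_zero] at hx
          exact absurd hx (not_lt.mpr htpos.le)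
        have hmin : min (dist x q) D < c₁ / t := by
          rw [lt_div_iff₀ htpos]
          have hx' := (lt_div_iff₀ hmpos).mp hx
          linarith [hx']
        have hdx : dist x q < c₁ / t := by
          rcases le_or_gt (dist x q) D with hcase | hcase
          · rwa [min_eq_left hcase] at hmin
          · rw [min_eq_right hcase.le] at hmin
            exact absurd hctD (not_lt.mpr hmin.le)
        exact mem_closedBall.mpr hdx.le
      have hmeas : ν {x | t < h x} ≤ ENNReal.ofReal (c₂ * (c₁ / t) ^ 2) :=
        le_trans (hνle t) <| le_trans
          (μ.mono (Set.inter_subset_left.trans hsub2))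
          (hball _ hct hctD.le)
      calc ν {x | t < h x} * ENNReal.ofReal (t ^ (p - 1)) ≤
          ENNReal.ofReal (c₂ * (c₁ / t) ^ 2) * ENNReal.ofReal (t ^ (p - 1)) :=
            mul_le_mul_left hmeas _
        _ = ENNReal.ofReal (c₂ * (c₁ / t) ^ 2 * t ^ (p - 1)) :=
            (ENNReal.ofReal_mul (by positivity)).symm
        _ ≤ ENNReal.ofReal (c₂ * c₁ ^ 2 * t ^ (p - 3)) := by
            refine ENNReal.ofReal_le_ofReal (le_of_eq ?_)
            have e1 : t ^ (p - 1) / t ^ (2:ℕ) = t ^ (p - 3) := by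
              rw [← Real.rpow_natCast t 2, ← Real.rpow_sub htpos]
              congr 1
              push_cast
              ring
            calc c₂ * (c₁ / t) ^ 2 * t ^ (p - 1)
                = c₂ * c₁ ^ 2 * (t ^ (p - 1) / t ^ (2:ℕ)) := by ring
              _ = c₂ * c₁ ^ 2 * t ^ (p - 3) := by rw [e1]
    have hInt : ∫⁻ t in Set.Ioi a, ENNReal.ofReal (c₂ * c₁ ^ 2 * t ^ (p - 3)) =
        ENNReal.ofReal (c₂ * c₁ ^ 2 * (a ^ (p - 2) / (2 - p))) := by
      rw [← ofReal_integral_eq_lintegral_ofReal]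
      · congr 1
        rw [MeasureTheory.integral_const_mul, integral_Ioi_rpow_of_lt (by linarith) ha]
        rw [show p - 3 + 1 = p - 2 by ring]
        have h2p : (2:ℝ) - p ≠ 0 := by linarith
        have hp2' : p - 2 ≠ 0 := by linarith
        field_simp
        ring
      · exact (integrableOn_Ioi_rpow_of_lt (by linarith) ha).const_mul _
      · filter_upwards [self_mem_ae_restrict
          (measurableSet_Ioi : MeasurableSet (Set.Ioi a))] with t ht
        have htpos : (0:ℝ) < t := ha.trans ht
        positivity
    calc _ ≤ ∫⁻ t in Set.Ioi a, ENNReal.ofReal (c₂ * c₁ ^ 2 * t ^ (p - 3)) :=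
        setLIntegral_mono (by fun_prop) key
      _ = _ := hInt
  -- put the pieces together
  have hfinal : ∫⁻ b in T, f b ^ p ∂μ ≤
      ENNReal.ofReal p * (μ T * ENNReal.ofReal (a ^ p / p) +
        ENNReal.ofReal (c₂ * c₁ ^ 2 * (a ^ (p - 2) / (2 - p)))) := by
    rw [step1]
    exact mul_le_mul_right (by rw [hsum]; exact add_le_add hIoc hIoi) _
  refine le_trans hfinal ?_
  rw [mul_add]
  rw [add_comm (ENNReal.ofReal (p * c₁ ^ p * c₂ * D ^ (2 - p) / (2 - p)))]
  refine add_le_add ?_ ?_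
  · -- ofReal p * (μ T * ofReal (a^p/p)) ≤ ofReal (2 c₁^p / D^p) * μ T
    rw [← mul_assoc, mul_comm (ENNReal.ofReal p) (μ T), mul_assoc,
      ← ENNReal.ofReal_mul hppos.le, mul_comm (μ T)]
    refine mul_le_mul_left (ENNReal.ofReal_le_ofReal ?_) _
    rw [mul_div_assoc', mul_comm, mul_div_assoc, div_self hppos.ne', mul_one,
      ha_def, Real.div_rpow hc₁.le hD.le]
    rw [div_le_div_iff₀ (Real.rpow_pos_of_pos hD p) (Real.rpow_pos_of_pos hD p)]
    nlinarith [Real.rpow_pos_of_pos hc₁ p, Real.rpow_pos_of_pos hD p]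
  · -- ofReal p * ofReal (c₂ c₁² a^(p-2)/(2-p)) ≤ ofReal (p c₁^p c₂ D^(2-p)/(2-p))
    rw [← ENNReal.ofReal_mul hppos.le]
    refine ENNReal.ofReal_le_ofReal (le_of_eq ?_)
    have h1 : a ^ (p - 2) = c₁ ^ (p - 2) * D ^ (2 - p) := by
      rw [ha_def, Real.div_rpow hc₁.le hD.le, div_eq_mul_inv, ← Real.rpow_neg hD.le]
      norm_num
    have h2 : c₁ ^ 2 * c₁ ^ (p - 2) = c₁ ^ p := by
      rw [← Real.rpow_natCast c₁ 2, ← Real.rpow_add hc₁]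
      norm_num
    rw [h1, show c₂ * c₁ ^ 2 * (c₁ ^ (p - 2) * D ^ (2 - p) / (2 - p)) =
      c₂ * (c₁ ^ 2 * c₁ ^ (p - 2)) * D ^ (2 - p) / (2 - p) from by ring, h2]
    ring
end

section
/- Let (X, d, μ) be a measure space, T ⊂ X measurable with μ(T) < ∞, and let p ∈ [1,2). Let S = {q₁,…,q_s} ⊂ X be a finite nonempty set, and suppose f : T → [0,∞] is measurable with f(b) ≤ c₁ / min(d(b,S), D) for all b ∈ T, where d(b,S) = min_j d(b,q_j), and μ(B(q,r)) ≤ c₂ r² for all q ∈ X and 0 < r ≤ D. Then there exists a constant c₃ > 0 depending only on c₁, c₂, D, μ(T) (not on s or p) such that ∫_T f^p dμ ≤ 2 c₃ s / (2 - p). -/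
open MeasureTheory Metric ENNReal

/-- Upper bound for a set lintegral by a constant bound on the (arbitrary, possibly
non-measurable) set. -/
private lemma setLIntegral_le_const_mul {α : Type*} [MeasurableSpace α] (μ : Measure α)
    (A : Set α) (F : α → ℝ≥0∞) (c : ℝ≥0∞) (h : ∀ x ∈ A, F x ≤ c) :
    ∫⁻ x in A, F x ∂μ ≤ c * μ A := by
  rw [lintegral_eq_nnreal]
  refine iSup₂_le fun φ hφ => ?_
  rw [SimpleFunc.map_lintegral]
  have key : ∀ y ∈ φ.range,
      (y : ℝ≥0∞) * (μ.restrict A) (φ ⁻¹' {y}) ≤ c * (μ.restrict A) (φ ⁻¹' {y}) := by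
    intro y _
    rcases Set.eq_empty_or_nonempty ((φ ⁻¹' {y}) ∩ A) with hemp | ⟨x, hxφ, hxA⟩
    · have : (μ.restrict A) (φ ⁻¹' {y}) = 0 := by
        rw [Measure.restrict_apply (φ.measurableSet_fiber y), hemp, measure_empty]
      simp [this]
    · have hyx : φ x = y := hxφ
      have : (y : ℝ≥0∞) ≤ c := by
        rw [← hyx]; exact (hφ x).trans (h x hxA)
      exact mul_le_mul_left this _
  calc ∑ y ∈ φ.range, (y : ℝ≥0∞) * (μ.restrict A) (φ ⁻¹' {y})
      ≤ ∑ y ∈ φ.range, c * (μ.restrict A) (φ ⁻¹' {y}) := Finset.sum_le_sum key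
    _ = c * ∑ y ∈ φ.range, (μ.restrict A) (φ ⁻¹' {y}) := by rw [Finset.mul_sum]
    _ = c * (μ.restrict A) Set.univ := by
        rw [SimpleFunc.sum_range_measure_preimage_singleton]
    _ = c * μ A := by rw [Measure.restrict_apply_univ]

private lemma aux_exp {p : ℝ} (hp1 : 1 ≤ p) (hp2 : p ≤ 2) : (2:ℝ) ^ (p - 2) ≤ p / 2 := by
  have h := convexOn_exp.2 (Set.mem_univ (-Real.log 2)) (Set.mem_univ (0:ℝ))
    (by linarith : (0:ℝ) ≤ 2 - p) (by linarith : (0:ℝ) ≤ 1 - (2 - p)) (by ring)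
  simp only [smul_eq_mul, mul_zero, add_zero, Real.exp_zero, mul_one] at h
  rw [Real.exp_neg, Real.exp_log two_pos] at h
  have h2 : (2:ℝ) ^ (p - 2) = Real.exp ((2 - p) * -Real.log 2) := by
    rw [Real.rpow_def_of_pos two_pos]
    congr 1; ring
  rw [h2]; linarith

private lemma rpow_two_eq {x : ℝ} : x ^ (2:ℝ) = x ^ (2:ℕ) := by
  have h := Real.rpow_natCast x 2
  push_cast at h
  exact h

private lemma aux_pow {p : ℝ} (hp1 : 1 ≤ p) (hp2 : p ≤ 2) (k : ℕ) :
    ((2:ℝ) ^ (k+1)) ^ p ≤ 4 * 4 ^ k * ((2:ℝ) ^ (p - 2)) ^ k := by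
  have h40 : (2:ℝ) ^ (2:ℝ) = 4 := by rw [rpow_two_eq]; norm_num
  have l1 : ((2:ℝ) ^ (k+1)) ^ p = (2:ℝ) ^ ((((k+1:ℕ)):ℝ) * p) := by
    rw [← Real.rpow_natCast 2 (k+1), ← Real.rpow_mul (by norm_num : (0:ℝ) ≤ 2)]
  have l2 : (2:ℝ) ^ ((2:ℝ) + 2 * (k:ℝ) + (p - 2) * (k:ℝ))
      = 4 * 4 ^ k * ((2:ℝ) ^ (p - 2)) ^ k := by
    rw [Real.rpow_add two_pos, Real.rpow_add two_pos,
      Real.rpow_mul (by norm_num : (0:ℝ) ≤ 2),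
      Real.rpow_mul (by norm_num : (0:ℝ) ≤ 2),
      Real.rpow_natCast, Real.rpow_natCast, h40]
  rw [l1, ← l2]
  apply Real.rpow_le_rpow_of_exponent_le one_le_two
  have hk : (0:ℝ) ≤ (k:ℝ) := Nat.cast_nonneg k
  push_cast
  nlinarith

theorem stmt1 {X : Type*} [MetricSpace X] [MeasurableSpace X]
    (μ : Measure X) (T : Set X) (hT : MeasurableSet T) (hTfin : μ T < ⊤)
    (c₁ c₂ D : ℝ) (hc₁ : 0 < c₁) (hc₂ : 0 < c₂) (hD : 0 < D)
    (hball : ∀ (q : X) (r : ℝ), 0 < r → r ≤ D →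
      μ (closedBall q r) ≤ ENNReal.ofReal (c₂ * r ^ 2)) :
    ∃ c₃ > (0:ℝ), ∀ p : ℝ, p ∈ Set.Ico (1:ℝ) 2 →
      ∀ (S : Finset X) (hS : S.Nonempty),
      ∀ f : X → ℝ≥0∞, Measurable f →
      (∀ b ∈ T, f b ≤ ENNReal.ofReal (c₁ / min (S.inf' hS fun q => dist b q) D)) →
      ∫⁻ b in T, f b ^ p ∂μ ≤ ENNReal.ofReal (2 * c₃ * S.card / (2 - p)) := by
  set M : ℝ := (max 1 (c₁ / D)) ^ 2 with hMdef
  have hM1 : (1:ℝ) ≤ M := by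
    have : (1:ℝ) ≤ max 1 (c₁ / D) := le_max_left _ _
    nlinarith
  have hM0 : (0:ℝ) ≤ M := by linarith
  set mT : ℝ := (μ T).toReal with hmTdef
  have hmT0 : 0 ≤ mT := ENNReal.toReal_nonneg
  have hμT : μ T = ENNReal.ofReal mT := (ENNReal.ofReal_toReal hTfin.ne).symm
  have hMpos : (0:ℝ) < M := lt_of_lt_of_le one_pos hM1
  have h8pos : (0:ℝ) < 8 * M * c₂ * D ^ 2 := by
    have h := mul_pos hMpos (mul_pos hc₂ (pow_pos hD 2))
    nlinarith
  have hMmT : (0:ℝ) ≤ M * mT := mul_nonneg hM0 hmT0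
  refine ⟨M * mT + 8 * M * c₂ * D ^ 2, by linarith, ?_⟩
  set c₃ : ℝ := M * mT + 8 * M * c₂ * D ^ 2 with hc₃def
  have hc₃0 : 0 < c₃ := by rw [hc₃def]; linarith
  rintro p ⟨hp1, hp2⟩ S hS f hfm hfle
  have hp0 : (0:ℝ) < p := by linarith
  have h2p : (0:ℝ) < 2 - p := by linarith
  set t : ℝ := (2:ℝ) ^ (p - 2) with htdef
  have ht0 : 0 ≤ t := (Real.rpow_pos_of_pos two_pos _).le
  have htle : t ≤ p / 2 := aux_exp hp1 hp2.le
  -- the basic real bound (c₁ / D) ^ p ≤ M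
  have hfar_real : (c₁ / D) ^ p ≤ M := by
    have h1 : (c₁ / D) ^ p ≤ (max 1 (c₁ / D)) ^ p :=
      Real.rpow_le_rpow (div_pos hc₁ hD).le (le_max_right _ _) hp0.le
    have h2 : (max 1 (c₁ / D)) ^ p ≤ (max 1 (c₁ / D)) ^ (2:ℝ) :=
      Real.rpow_le_rpow_of_exponent_le (le_max_left _ _) (by linarith)
    have h3 : (max 1 (c₁ / D)) ^ (2:ℝ) = M := by rw [rpow_two_eq]
    exact h1.trans (h2.trans_eq h3)
  -- bound for a single q ∈ S
  set B : ℝ≥0∞ := ENNReal.ofReal (c₃ / (2 - p)) with hBdef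
  have keybound : ∀ q : X,
      ∫⁻ b in {b | S.inf' hS (fun r => dist b r) = dist b q} ∩ T, f b ^ p ∂μ ≤ B := by
    intro q
    set V : Set X := {b | S.inf' hS (fun r => dist b r) = dist b q} with hVdef
    set far : Set X := {b | D ≤ dist b q} with hfardef
    set Z : Set X := {b | dist b q = 0} with hZdef
    set A : ℕ → Set X := fun k => {b | D / 2 ^ (k+1) < dist b q ∧ dist b q ≤ D / 2 ^ k}
      with hAdef
    have cover : V ∩ T ⊆ (V ∩ T ∩ far) ∪ ((V ∩ T ∩ Z) ∪ ⋃ k, (V ∩ T ∩ A k)) := by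
      intro b hb
      rcases le_or_gt D (dist b q) with hfarb | hnear
      · exact Or.inl ⟨hb, hfarb⟩
      rcases (dist_nonneg : (0:ℝ) ≤ dist b q).eq_or_lt with h0 | h0
      · exact Or.inr (Or.inl ⟨hb, h0.symm⟩)
      · refine Or.inr (Or.inr ?_)
        have hex : ∃ n : ℕ, D / 2 ^ (n+1) < dist b q := by
          obtain ⟨n, hn⟩ := pow_unbounded_of_one_lt (D / dist b q) (one_lt_two (α := ℝ))
          refine ⟨n, ?_⟩
          have h1 : D / 2 ^ n < dist b q := by
            rw [div_lt_iff₀ (by positivity)]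
            rw [div_lt_iff₀ h0] at hn
            linarith [mul_pos h0 (pow_pos (two_pos (α := ℝ)) n)]
          have h2 : D / 2 ^ (n+1) ≤ D / 2 ^ n := by
            apply div_le_div_of_nonneg_left hD.le (by positivity)
            exact pow_le_pow_right₀ one_le_two (Nat.le_succ n)
          linarith
        refine Set.mem_iUnion.mpr ⟨Nat.find hex, hb, Nat.find_spec hex, ?_⟩
        rcases Nat.eq_zero_or_pos (Nat.find hex) with hk0 | hkpos
        · rw [hk0]; simpa using hnear.le
        · obtain ⟨j, hj⟩ := Nat.exists_eq_succ_of_ne_zero hkpos.ne'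
          rw [hj]
          have hmin := Nat.find_min hex (by omega : j < Nat.find hex)
          simpa [Nat.succ_eq_add_one] using not_lt.mp hmin
    -- far part
    have hfarpart : ∫⁻ b in V ∩ T ∩ far, f b ^ p ∂μ ≤ ENNReal.ofReal (M * mT) := by
      have hpt : ∀ b ∈ V ∩ T ∩ far, f b ^ p ≤ ENNReal.ofReal M := by
        rintro b ⟨⟨hbV, hbT⟩, hbfar⟩
        have hbV' : S.inf' hS (fun r => dist b r) = dist b q := hbV
        have hbfar' : D ≤ dist b q := hbfar
        have h1 : f b ≤ ENNReal.ofReal (c₁ / D) := by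
          have := hfle b hbT
          rwa [hbV', min_eq_right hbfar'] at this
        calc f b ^ p ≤ (ENNReal.ofReal (c₁ / D)) ^ p :=
              ENNReal.rpow_le_rpow h1 hp0.le
          _ = ENNReal.ofReal ((c₁ / D) ^ p) :=
              ENNReal.ofReal_rpow_of_pos (div_pos hc₁ hD)
          _ ≤ ENNReal.ofReal M := ENNReal.ofReal_le_ofReal hfar_real
      calc ∫⁻ b in V ∩ T ∩ far, f b ^ p ∂μ
          ≤ ENNReal.ofReal M * μ (V ∩ T ∩ far) :=
            setLIntegral_le_const_mul μ _ _ _ hpt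
        _ ≤ ENNReal.ofReal M * ENNReal.ofReal mT := by
            apply mul_le_mul_right
            refine le_trans (measure_mono ?_) hμT.le
            exact Set.inter_subset_left.trans Set.inter_subset_right
        _ = ENNReal.ofReal (M * mT) := (ENNReal.ofReal_mul hM0).symm
    -- zero part
    have hzpart : ∫⁻ b in V ∩ T ∩ Z, f b ^ p ∂μ ≤ 0 := by
      have hpt : ∀ b ∈ V ∩ T ∩ Z, f b ^ p ≤ 0 := by
        rintro b ⟨⟨hbV, hbT⟩, hbZ⟩
        have hbV' : S.inf' hS (fun r => dist b r) = dist b q := hbV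
        have hZ0 : dist b q = 0 := hbZ
        have h1 : f b ≤ 0 := by
          have := hfle b hbT
          rw [hbV', hZ0, min_eq_left hD.le, _root_.div_zero, ENNReal.ofReal_zero] at this
          exact this
        have h2 : f b = 0 := le_zero_iff.mp h1
        rw [h2, ENNReal.zero_rpow_of_pos hp0]
      calc ∫⁻ b in V ∩ T ∩ Z, f b ^ p ∂μ ≤ 0 * μ (V ∩ T ∩ Z) :=
            setLIntegral_le_const_mul μ _ _ _ hpt
        _ = 0 := zero_mul _
    -- annulus part
    have hannpart : ∀ k : ℕ, ∫⁻ b in V ∩ T ∩ A k, f b ^ p ∂μ ≤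
        ENNReal.ofReal ((4 * M * c₂ * D ^ 2) * t ^ k) := by
      intro k
      have hpow_pos : (0:ℝ) < 2 ^ (k+1) := by positivity
      have hrad_pos : (0:ℝ) < D / 2 ^ (k+1) := by positivity
      have hBk_pos : (0:ℝ) < c₁ * 2 ^ (k+1) / D := by positivity
      have hpt : ∀ b ∈ V ∩ T ∩ A k,
          f b ^ p ≤ ENNReal.ofReal ((c₁ * 2 ^ (k+1) / D) ^ p) := by
        rintro b ⟨⟨hbV, hbT⟩, hbA1, hbA2⟩
        have hbV' : S.inf' hS (fun r => dist b r) = dist b q := hbV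
        have hbA1' : D / 2 ^ (k+1) < dist b q := hbA1
        have hmin : D / 2 ^ (k+1) ≤ min (dist b q) D := by
          apply le_min hbA1'.le
          exact div_le_self hD.le (one_le_pow₀ one_le_two)
        have h1 : c₁ / min (dist b q) D ≤ c₁ * 2 ^ (k+1) / D := by
          rw [← div_div_eq_mul_div]
          exact div_le_div_of_nonneg_left hc₁.le hrad_pos hmin
        have h2 : f b ≤ ENNReal.ofReal (c₁ * 2 ^ (k+1) / D) := by
          refine le_trans ?_ (ENNReal.ofReal_le_ofReal h1)
          have := hfle b hbT
          rwa [hbV'] at this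
        calc f b ^ p ≤ (ENNReal.ofReal (c₁ * 2 ^ (k+1) / D)) ^ p :=
              ENNReal.rpow_le_rpow h2 hp0.le
          _ = ENNReal.ofReal ((c₁ * 2 ^ (k+1) / D) ^ p) :=
              ENNReal.ofReal_rpow_of_pos hBk_pos
      have hsub : V ∩ T ∩ A k ⊆ closedBall q (D / 2 ^ k) := by
        rintro b ⟨_, _, hbA2⟩
        exact mem_closedBall.mpr hbA2
      have hmeas : μ (V ∩ T ∩ A k) ≤ ENNReal.ofReal (c₂ * (D / 2 ^ k) ^ 2) := by
        refine le_trans (measure_mono hsub) (hball q _ (by positivity) ?_)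
        exact div_le_self hD.le (one_le_pow₀ one_le_two)
      have hreal : (c₁ * 2 ^ (k+1) / D) ^ p * (c₂ * (D / 2 ^ k) ^ 2)
          ≤ (4 * M * c₂ * D ^ 2) * t ^ k := by
        have e1 : (c₁ * 2 ^ (k+1) / D) ^ p = (c₁ / D) ^ p * ((2:ℝ) ^ (k+1)) ^ p := by
          rw [← Real.mul_rpow (div_pos hc₁ hD).le hpow_pos.le]
          congr 1
          field_simp
        have e2 : ((D / 2 ^ k) ^ 2 : ℝ) = D ^ 2 / 4 ^ k := by
          rw [div_pow, ← pow_mul, mul_comm k 2, pow_mul]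
          norm_num
        rw [e1, e2]
        have h1 : (c₁ / D) ^ p * ((2:ℝ) ^ (k+1)) ^ p ≤ M * (4 * 4 ^ k * t ^ k) := by
          apply mul_le_mul hfar_real (aux_pow hp1 hp2.le k)
            (Real.rpow_nonneg hpow_pos.le p) hM0
        have h4k : (0:ℝ) < 4 ^ k := by positivity
        calc (c₁ / D) ^ p * ((2:ℝ) ^ (k+1)) ^ p * (c₂ * (D ^ 2 / 4 ^ k))
            ≤ M * (4 * 4 ^ k * t ^ k) * (c₂ * (D ^ 2 / 4 ^ k)) := by
              apply mul_le_mul_of_nonneg_right h1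
              positivity
          _ = (4 * M * c₂ * D ^ 2) * t ^ k := by
              field_simp
      calc ∫⁻ b in V ∩ T ∩ A k, f b ^ p ∂μ
          ≤ ENNReal.ofReal ((c₁ * 2 ^ (k+1) / D) ^ p) * μ (V ∩ T ∩ A k) :=
            setLIntegral_le_const_mul μ _ _ _ hpt
        _ ≤ ENNReal.ofReal ((c₁ * 2 ^ (k+1) / D) ^ p) *
              ENNReal.ofReal (c₂ * (D / 2 ^ k) ^ 2) := mul_le_mul_right hmeas _
        _ = ENNReal.ofReal ((c₁ * 2 ^ (k+1) / D) ^ p * (c₂ * (D / 2 ^ k) ^ 2)) :=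
            (ENNReal.ofReal_mul (Real.rpow_nonneg hBk_pos.le p)).symm
        _ ≤ ENNReal.ofReal ((4 * M * c₂ * D ^ 2) * t ^ k) :=
            ENNReal.ofReal_le_ofReal hreal
    -- sum of annuli
    have hannsum : ∑' k : ℕ, ∫⁻ b in V ∩ T ∩ A k, f b ^ p ∂μ ≤
        ENNReal.ofReal (8 * M * c₂ * D ^ 2 / (2 - p)) := by
      have hC0 : (0:ℝ) ≤ 4 * M * c₂ * D ^ 2 := by positivity
      calc ∑' k : ℕ, ∫⁻ b in V ∩ T ∩ A k, f b ^ p ∂μ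
          ≤ ∑' k : ℕ, ENNReal.ofReal ((4 * M * c₂ * D ^ 2) * t ^ k) :=
            ENNReal.tsum_le_tsum hannpart
        _ = ∑' k : ℕ, ENNReal.ofReal (4 * M * c₂ * D ^ 2) * (ENNReal.ofReal t) ^ k := by
            congr 1; funext k
            rw [ENNReal.ofReal_mul hC0, ENNReal.ofReal_pow ht0]
        _ = ENNReal.ofReal (4 * M * c₂ * D ^ 2) * ∑' k : ℕ, (ENNReal.ofReal t) ^ k :=
            ENNReal.tsum_mul_left
        _ = ENNReal.ofReal (4 * M * c₂ * D ^ 2) * (1 - ENNReal.ofReal t)⁻¹ := by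
            rw [ENNReal.tsum_geometric]
        _ ≤ ENNReal.ofReal (4 * M * c₂ * D ^ 2) * ENNReal.ofReal (2 / (2 - p)) := by
            apply mul_le_mul_right
            have e1 : (1 : ℝ≥0∞) - ENNReal.ofReal t = ENNReal.ofReal (1 - t) := by
              rw [ENNReal.ofReal_sub 1 ht0, ENNReal.ofReal_one]
            rw [e1]
            have h1 : ENNReal.ofReal ((2 - p)/2) ≤ ENNReal.ofReal (1 - t) :=
              ENNReal.ofReal_le_ofReal (by linarith)
            calc (ENNReal.ofReal (1 - t))⁻¹ ≤ (ENNReal.ofReal ((2 - p)/2))⁻¹ :=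
                  ENNReal.inv_le_inv' h1
              _ = ENNReal.ofReal (((2 - p)/2)⁻¹) :=
                  (ENNReal.ofReal_inv_of_pos (by positivity)).symm
              _ = ENNReal.ofReal (2 / (2 - p)) := by rw [inv_div]
        _ = ENNReal.ofReal (8 * M * c₂ * D ^ 2 / (2 - p)) := by
            rw [← ENNReal.ofReal_mul hC0]
            congr 1
            field_simp
            ring
    -- combine
    calc ∫⁻ b in V ∩ T, f b ^ p ∂μ
        ≤ ∫⁻ b in (V ∩ T ∩ far) ∪ ((V ∩ T ∩ Z) ∪ ⋃ k, (V ∩ T ∩ A k)), f b ^ p ∂μ :=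
          lintegral_mono_set cover
      _ ≤ (∫⁻ b in V ∩ T ∩ far, f b ^ p ∂μ) +
            ∫⁻ b in (V ∩ T ∩ Z) ∪ ⋃ k, (V ∩ T ∩ A k), f b ^ p ∂μ :=
          lintegral_union_le _ _ _
      _ ≤ (∫⁻ b in V ∩ T ∩ far, f b ^ p ∂μ) +
            ((∫⁻ b in V ∩ T ∩ Z, f b ^ p ∂μ) +
              ∫⁻ b in ⋃ k, (V ∩ T ∩ A k), f b ^ p ∂μ) :=
          add_le_add_right (lintegral_union_le _ _ _) _
      _ ≤ ENNReal.ofReal (M * mT) +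
            (0 + ENNReal.ofReal (8 * M * c₂ * D ^ 2 / (2 - p))) := by
          refine add_le_add hfarpart (add_le_add hzpart ?_)
          exact le_trans (lintegral_iUnion_le _ _) hannsum
      _ ≤ B := by
          rw [zero_add, ← ENNReal.ofReal_add (by positivity) (by positivity)]
          apply ENNReal.ofReal_le_ofReal
          have h1 : M * mT ≤ M * mT / (2 - p) := by
            rw [le_div_iff₀ h2p]
            nlinarith [mul_nonneg hMmT (by linarith : (0:ℝ) ≤ p - 1)]
          have h2 : c₃ / (2 - p) = M * mT / (2 - p) + 8 * M * c₂ * D ^ 2 / (2 - p) := by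
            rw [hc₃def, add_div]
          linarith
  -- assemble over S
  have cover1 : T ⊆ ⋃ q : {x // x ∈ S},
      ({b | S.inf' hS (fun r => dist b r) = dist b ↑q} ∩ T) := by
    intro b hb
    obtain ⟨q, hqS, hq⟩ := S.exists_mem_eq_inf' hS (fun r => dist b r)
    exact Set.mem_iUnion.mpr ⟨⟨q, hqS⟩, hq, hb⟩
  calc ∫⁻ b in T, f b ^ p ∂μ
      ≤ ∫⁻ b in ⋃ q : {x // x ∈ S},
          ({b | S.inf' hS (fun r => dist b r) = dist b ↑q} ∩ T), f b ^ p ∂μ :=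
        lintegral_mono_set cover1
    _ ≤ ∑' q : {x // x ∈ S},
          ∫⁻ b in {b | S.inf' hS (fun r => dist b r) = dist b ↑q} ∩ T, f b ^ p ∂μ :=
        lintegral_iUnion_le _ _
    _ ≤ ∑' _ : {x // x ∈ S}, B := ENNReal.tsum_le_tsum fun q => keybound ↑q
    _ = (S.card : ℝ≥0∞) * B := by
        rw [tsum_fintype, Finset.sum_const, Finset.card_univ, Fintype.card_coe,
          nsmul_eq_mul]
    _ ≤ ENNReal.ofReal (2 * c₃ * S.card / (2 - p)) := by
        rw [show ((S.card : ℝ≥0∞)) = ENNReal.ofReal (S.card : ℝ) by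
          rw [ENNReal.ofReal_natCast], ← ENNReal.ofReal_mul (Nat.cast_nonneg _)]
        apply ENNReal.ofReal_le_ofReal
        have hcard : (0:ℝ) ≤ (S.card : ℝ) := Nat.cast_nonneg _
        have e : (S.card:ℝ) * (c₃/(2-p)) = ((S.card:ℝ) * c₃)/(2-p) := by ring
        rw [e, div_le_div_iff₀ h2p h2p]
        nlinarith [mul_nonneg (mul_nonneg hcard hc₃0.le) h2p.le]
end
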